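/- If à ∈ Sp(W, ω) over ℚ has characteristic polynomial ρρ* with ρ irreducible, ρ ≠ ρ*, and χ_à separable, then à has no eigenvalues of modulus 1. -/

import Mathlib

open Polynomial

private lemma conj_eval_rat (p : Polynomial ℚ) (w : ℂ) :
    (starRingEnd ℂ) ((p.map (algebraMap ℚ ℂ)).eval w)
      = (p.map (algebraMap ℚ ℂ)).eval ((starRingEnd ℂ) w) := by
  rw [Polynomial.eval_map, Polynomial.eval_map, Polynomial.hom_eval₂]
  congr 1
  exact Subsingleton.elim _ _

/-- If `f ∈ Sp(W, ω)` over `ℚ` has characteristic polynomial `ρ·ρ*` with `ρ`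
irreducible, `ρ` not associated to `ρ*`, and `χ_f` separable, then `f` has no
eigenvalues of modulus 1. -/
theorem stmt_11 (W : Type*) [AddCommGroup W] [Module ℚ W] [FiniteDimensional ℚ W]
    (ω : W →ₗ[ℚ] W →ₗ[ℚ] ℚ)
    (halt : ∀ v, ω v v = 0)
    (hnd : ∀ v, (∀ w, ω v w = 0) → v = 0)
    (f : W →ₗ[ℚ] W) (hf : ∀ v w, ω (f v) (f w) = ω v w)
    (ρ ρstar : Polynomial ℚ) (hρ : Irreducible ρ)
    (hρs : Associated ρstar ρ.reverse)
    (hne : ¬ Associated ρ ρstar)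
    (hχ : LinearMap.charpoly f = ρ * ρstar)
    (hsep : ∀ z : ℂ,
      ((LinearMap.charpoly f).map (algebraMap ℚ ℂ)).rootMultiplicity z ≤ 1) :
    ∀ z : ℂ, ((LinearMap.charpoly f).map (algebraMap ℚ ℂ)).IsRoot z →
      ‖z‖ ≠ 1 := by
  intro z hz h1
  set i := algebraMap ℚ ℂ
  have hz0 : z ≠ 0 := by
    intro h; rw [h] at h1; simp at h1
  have hzinv0 : z⁻¹ ≠ 0 := inv_ne_zero hz0
  haveI : Invertible (z⁻¹) := invertibleOfNonzero hzinv0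
  have hinvOf : ⅟ (z⁻¹) = z := by
    rw [invOf_eq_inv, inv_inv]
  -- conjugate equals inverse on the unit circle
  have hconj : (starRingEnd ℂ) z = z⁻¹ := by
    field_simp
    rw [mul_comm, Complex.mul_conj, Complex.normSq_eq_norm_sq, h1]
    norm_num
  -- ρstar vanishes iff reverse ρ vanishes
  obtain ⟨u, hu⟩ := hρs
  obtain ⟨c, hcu, hc⟩ := Polynomial.isUnit_iff.mp u.isUnit
  have hrev : ∀ w : ℂ, (ρstar.map i).eval w = 0 ↔ ((ρ.reverse).map i).eval w = 0 := by
    intro w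
    rw [← hu]
    simp [← hc, Polynomial.eval_map, Polynomial.eval₂_mul, hcu.ne_zero]
  -- reverse ρ at z = 0 ↔ ρ at z⁻¹ = 0
  have hrev2 : ((ρ.reverse).map i).eval z = 0 ↔ (ρ.map i).eval z⁻¹ = 0 := by
    have h := Polynomial.eval₂_reverse_eq_zero_iff i (z⁻¹) ρ
    rwa [hinvOf, ← Polynomial.eval_map, ← Polynomial.eval_map] at h
  -- from ρ(z)=0 conclude ρ(z⁻¹)=0
  have hkey : ∀ w : ℂ, (ρ.map i).eval w = 0 → (ρ.map i).eval ((starRingEnd ℂ) w) = 0 := by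
    intro w h
    rw [← conj_eval_rat, h, map_zero]
  have hχz : ((ρ.map i)).eval z * ((ρstar.map i)).eval z = 0 := by
    have := hz
    rwa [Polynomial.IsRoot, hχ, Polynomial.map_mul, Polynomial.eval_mul] at this
  have hboth : (ρ.map i).eval z = 0 ∧ (ρstar.map i).eval z = 0 := by
    rcases mul_eq_zero.mp hχz with h | h
    · refine ⟨h, ?_⟩
      have h2 := hkey z h
      rw [hconj] at h2
      exact (hrev z).mpr (hrev2.mpr h2)
    · refine ⟨?_, h⟩
      have h2 := hrev2.mp ((hrev z).mp h)
      have h3 := hkey _ h2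
      rwa [map_inv₀, hconj, inv_inv] at h3
  have hρ0 : ρ.map i ≠ 0 := Polynomial.map_ne_zero hρ.ne_zero
  have hρs00 : ρstar ≠ 0 := by
    intro h
    rw [h, zero_mul] at hu
    exact hρ.ne_zero (Polynomial.reverse_eq_zero.mp hu.symm)
  have hρs0 : ρstar.map i ≠ 0 := Polynomial.map_ne_zero hρs00
  have h2 : 2 ≤ ((LinearMap.charpoly f).map i).rootMultiplicity z := by
    rw [hχ, Polynomial.map_mul,
      Polynomial.rootMultiplicity_mul (mul_ne_zero hρ0 hρs0)]
    have a := (Polynomial.rootMultiplicity_pos hρ0).mpr hboth.1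
    have b := (Polynomial.rootMultiplicity_pos hρs0).mpr hboth.2
    omega
  have := hsep z
  omega
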